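/- Let x_1, …, x_n ∈ Ω be such that the Gram matrix G = [K(x_i,x_j)]_{i,j=1}^n is invertible, and define S_n(x) = K(x,x) − v(x)ᵀ G⁻¹ v(x) with v(x) = (K(x_1,x),…,K(x_n,x))ᵀ (and S_0(x) = K(x,x)). Then for all x, y ∈ Ω, √(S_n(x)) − √(S_n(y)) ≤ ϱ(x,y); that is, x ↦ √(S_n(x)) is 1-Lipschitz with respect to the canonical pseudometric ϱ. -/

import Mathlib

open MeasureTheory Filter
open scoped ENNReal

noncomputable section

/-- The Gram matrix `[K(x_i,x_j)]` of the points `x : Fin n → E`, where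
`K(x,y) = ⟪Φ x, Φ y⟫`. -/
def gramM {E H : Type*} [NormedAddCommGroup H] [InnerProductSpace ℝ H]
    (Φ : E → H) {n : ℕ} (x : Fin n → E) : Matrix (Fin n) (Fin n) ℝ :=
  Matrix.of fun i j => (inner ℝ (Φ (x i)) (Φ (x j)) : ℝ)

/-- The vector `v(y) = (K(x_1,y), …, K(x_n,y))`. -/
def kvec {E H : Type*} [NormedAddCommGroup H] [InnerProductSpace ℝ H]
    (Φ : E → H) {n : ℕ} (x : Fin n → E) (y : E) : Fin n → ℝ :=
  fun i => (inner ℝ (Φ (x i)) (Φ y) : ℝ)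

/-- `S_n(y) = K(y,y) − v(y)ᵀ G⁻¹ v(y)`; for `n = 0` this is `S_0(y) = K(y,y)`. -/
def Sfun {E H : Type*} [NormedAddCommGroup H] [InnerProductSpace ℝ H]
    (Φ : E → H) {n : ℕ} (x : Fin n → E) (y : E) : ℝ :=
  (inner ℝ (Φ y) (Φ y) : ℝ) -
    dotProduct (kvec Φ x y) (Matrix.mulVec (gramM Φ x)⁻¹ (kvec Φ x y))

/-- if the Gram matrix of `x_1,…,x_n ∈ Ω` is invertible, then
`√(S_n(y)) − √(S_n(z)) ≤ ϱ(y,z) = ‖Φ y − Φ z‖` for all `y, z ∈ Ω`; i.e. `√S_n` is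
`1`-Lipschitz with respect to the canonical pseudometric. -/
theorem sqrt_Sfun_lipschitz {d : ℕ} {H : Type*}
    [NormedAddCommGroup H] [InnerProductSpace ℝ H]
    (Ω : Set (EuclideanSpace ℝ (Fin d))) (hΩ : IsCompact Ω) (hne : Ω.Nonempty)
    (Φ : EuclideanSpace ℝ (Fin d) → H) (hΦ : ContinuousOn Φ Ω)
    (n : ℕ) (x : Fin n → EuclideanSpace ℝ (Fin d)) (hx : ∀ i, x i ∈ Ω)
    (hG : IsUnit (gramM Φ x).det) :
    ∀ y ∈ Ω, ∀ z ∈ Ω,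
      Real.sqrt (Sfun Φ x y) - Real.sqrt (Sfun Φ x z) ≤ ‖Φ y - Φ z‖ := by
  classical
  intro y _ z _
  set A := gramM Φ x with hA
  set c : EuclideanSpace ℝ (Fin d) → Fin n → ℝ :=
    fun u => A⁻¹.mulVec (kvec Φ x u) with hc
  set w : EuclideanSpace ℝ (Fin d) → H := fun u => ∑ i, c u i • Φ (x i) with hw
  -- orthogonality of the residual to every Φ (x i)
  have horth : ∀ u i, (inner ℝ (Φ (x i)) (Φ u - w u) : ℝ) = 0 := by
    intro u i
    have hmul : A.mulVec (c u) = kvec Φ x u := by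
      rw [hc, Matrix.mulVec_mulVec, Matrix.mul_nonsing_inv A hG, Matrix.one_mulVec]
    have hmi := congrFun hmul i
    simp only [Matrix.mulVec, dotProduct, hA, gramM, Matrix.of_apply] at hmi
    simp only [inner_sub_right, hw, inner_sum, inner_smul_right]
    rw [sub_eq_zero]
    have hmi' : (inner ℝ (Φ (x i)) (Φ u) : ℝ)
        = ∑ j, (inner ℝ (Φ (x i)) (Φ (x j)) : ℝ) * c u j := hmi.symm
    rw [hmi']
    exact Finset.sum_congr rfl fun j _ => (mul_comm _ _)
  have hperp : ∀ u v, (inner ℝ (Φ u - w u) (w v) : ℝ) = 0 := by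
    intro u v
    rw [hw]
    simp only [inner_sum, inner_smul_right]
    refine Finset.sum_eq_zero fun i _ => ?_
    rw [real_inner_comm, horth, mul_zero]
  -- Sfun equals the squared norm of the residual
  have hS : ∀ u, Sfun Φ x u = ‖Φ u - w u‖ ^ 2 := by
    intro u
    have h1 : Sfun Φ x u = (inner ℝ (Φ u - w u) (Φ u) : ℝ) := by
      rw [Sfun, inner_sub_left]
      congr 1
      rw [hw, sum_inner, dotProduct]
      exact Finset.sum_congr rfl fun i _ => by
        rw [real_inner_smul_left, kvec, mul_comm]
    have h2 : (inner ℝ (Φ u - w u) (Φ u) : ℝ)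
        = (inner ℝ (Φ u - w u) (Φ u - w u) : ℝ) := by
      rw [inner_sub_right, hperp, sub_zero]
    rw [h1, h2, real_inner_self_eq_norm_sq]
  have hsqrt : ∀ u, Real.sqrt (Sfun Φ x u) = ‖Φ u - w u‖ := by
    intro u
    rw [hS u, Real.sqrt_sq (norm_nonneg _)]
  -- key: ‖Φ y - w y‖ ≤ ‖Φ y - w z‖
  have hkey : ‖Φ y - w y‖ ≤ ‖Φ y - w z‖ := by
    have ha : Φ y - w z = (Φ y - w y) + (w y - w z) := by abel
    have hp : (inner ℝ (Φ y - w y) (w y - w z) : ℝ) = 0 := by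
      rw [inner_sub_right, hperp, hperp, sub_zero]
    have hsq : ‖Φ y - w z‖ ^ 2 = ‖Φ y - w y‖ ^ 2 + ‖w y - w z‖ ^ 2 := by
      rw [ha, @norm_add_sq_real, hp]; ring
    nlinarith [norm_nonneg (Φ y - w z), norm_nonneg (Φ y - w y),
      norm_nonneg (w y - w z), sq_nonneg ‖w y - w z‖]
  rw [hsqrt, hsqrt]
  have htri : ‖Φ y - w z‖ ≤ ‖Φ y - Φ z‖ + ‖Φ z - w z‖ := by
    calc ‖Φ y - w z‖ = ‖(Φ y - Φ z) + (Φ z - w z)‖ := by abel_nf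
      _ ≤ ‖Φ y - Φ z‖ + ‖Φ z - w z‖ := norm_add_le _ _
  linarith

end
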